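/- Let (U_0, ..., U_k) be a positively separated tuple of subsets of X with x_0 ∈ U_0, δ := min_{i≠j} dist(U_i, U_j), and U := U_0 ∪ ... ∪ U_k. If S, T ∈ S_Φ(X, x_0) have supports contained in U and d_Φ(S, T) < δ, then d_Φ(S ∩ U_i, T ∩ U_i) ≤ d_Φ(S, T) for every i, and rank(S ∩ U_i) = rank(T ∩ U_i) for every i = 1, ..., k. -/

import Mathlib

open Filter

/-- A symmetric norm: a norm on the space `c_00` of finitely supported real
sequences (modelled as `ℕ →₀ ℝ`), normalised by `Φ(1,0,0,…) = 1`, and invariant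
under permutations of the entries and under replacing entries by their absolute
values. -/
structure SymmetricNorm where
  toFun : (ℕ →₀ ℝ) → ℝ
  nonneg : ∀ ξ, 0 ≤ toFun ξ
  eq_zero : ∀ ξ, toFun ξ = 0 → ξ = 0
  add_le : ∀ ξ η, toFun (ξ + η) ≤ toFun ξ + toFun η
  smul_eq : ∀ (c : ℝ) (ξ), toFun (c • ξ) = |c| * toFun ξ
  norm_single : toFun (Finsupp.single 0 1) = 1
  perm_invariant : ∀ (π : Equiv.Perm ℕ) (ξ), toFun (Finsupp.equivMapDomain π ξ) = toFun ξ
  abs_invariant : ∀ (ξ : ℕ →₀ ℝ), toFun (Finsupp.mapRange (fun a => |a|) abs_zero ξ) = toFun ξ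

/-- The truncation `(ξ_0, …, ξ_{n-1}, 0, 0, …)` of a sequence, as an element of `c_00`. -/
noncomputable def truncF (ξ : ℕ → ℝ) (n : ℕ) : ℕ →₀ ℝ :=
  ∑ i ∈ Finset.range n, Finsupp.single i (ξ i)

/-- The extension of a symmetric norm to sequences: `Φ(ξ) = lim_n Φ(ξ_0,…,ξ_{n-1},0,0,…)`. -/
noncomputable def SymmetricNorm.ext (Φ : SymmetricNorm) (ξ : ℕ → ℝ) : ℝ :=
  limUnder atTop fun n => Φ.toFun (truncF ξ n)

/-- Membership in the natural domain `ℓ_Φ`: the sequence tends to `0` and the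
`Φ`-norms of its truncations converge. -/
def MemLPhi (Φ : SymmetricNorm) (ξ : ℕ → ℝ) : Prop :=
  Tendsto ξ atTop (nhds 0) ∧ ∃ L, Tendsto (fun n => Φ.toFun (truncF ξ n)) atTop (nhds L)

/-- Membership in `ℓ_Φ^+`: nonnegative `Φ`-summable sequences. -/
def MemLPhiPlus (Φ : SymmetricNorm) (ξ : ℕ → ℝ) : Prop :=
  (∀ i, 0 ≤ ξ i) ∧ MemLPhi Φ ξ

/-- A symmetric norm is regular if `Φ(ξ_{n+1}, ξ_{n+2}, …) → 0` for every `ξ ∈ ℓ_Φ`. -/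
def SymmetricNorm.Regular (Φ : SymmetricNorm) : Prop :=
  ∀ ξ : ℕ → ℝ, MemLPhi Φ ξ →
    Tendsto (fun n => Φ.ext fun i => ξ (n + i)) atTop (nhds 0)

/-- `partialMax ξ k` is the supremum of sums of `k` distinct entries of `ξ`;
for nonnegative `ξ ∈ c_0` this equals `ξ^↓_1 + ⋯ + ξ^↓_k`. -/
noncomputable def partialMax (ξ : ℕ → ℝ) (k : ℕ) : ℝ :=
  sSup ((fun s : Finset ℕ => ∑ i ∈ s, ξ i) '' {s | s.card = k})

/-- The nonincreasing rearrangement `ξ^↓` of a (nonnegative, null) sequence,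
defined via `ξ^↓_1 = max ξ_i`, `ξ^↓_1 + ξ^↓_2 = max_{i ≠ j} (ξ_i + ξ_j)`, …. -/
noncomputable def decRearr (ξ : ℕ → ℝ) (k : ℕ) : ℝ :=
  partialMax ξ (k + 1) - partialMax ξ k
open scoped Classical

variable {X : Type*} [MetricSpace X]

/-- `s : ℕ → X` is an enumeration of the countable multiset `S` in `(X, x₀)`:
every point other than the basepoint occurs in `s` exactly according to its
multiplicity in `S`. -/
def IsEnum (x0 : X) (S : X → ℕ∞) (s : ℕ → X) : Prop :=
  ∀ x, x ≠ x0 → S x = {i : ℕ | s i = x}.encard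

/-- A countable multiset in `(X, x₀)`: a multiplicity function in which the
basepoint is the only point of infinite multiplicity and whose support is
countable. -/
def IsCMultiset (x0 : X) (S : X → ℕ∞) : Prop :=
  S x0 = ⊤ ∧ (∀ x, x ≠ x0 → S x ≠ ⊤) ∧ {x | S x ≠ 0}.Countable

/-- Membership in `S_Φ(X, x₀)`: a countable multiset whose points `s_i` satisfy
`(d(x₀, s_i))_i ∈ ℓ_Φ`. -/
def MemSPhi (Φ : SymmetricNorm) (x0 : X) (S : X → ℕ∞) : Prop :=
  IsCMultiset x0 S ∧ ∃ s : ℕ → X, IsEnum x0 S s ∧ MemLPhi Φ fun i => dist x0 (s i)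

/-- The distance `d_Φ(S, T)`: the infimum over pairs of enumerations `(s_i), (t_i)`
of `S, T` of `Φ(d(s_1,t_1), d(s_2,t_2), …)`. -/
noncomputable def dPhi (Φ : SymmetricNorm) (x0 : X) (S T : X → ℕ∞) : ℝ :=
  sInf {r | ∃ s t : ℕ → X, IsEnum x0 S s ∧ IsEnum x0 T t ∧
    MemLPhi Φ (fun i => dist (s i) (t i)) ∧ r = Φ.ext fun i => dist (s i) (t i)}

/-- The sum of two multisets (addition of multiplicities away from the basepoint). -/
noncomputable def msum (x0 : X) (S T : X → ℕ∞) : X → ℕ∞ := fun x => if x = x0 then ⊤ else S x + T x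

/-- The difference of two multisets (subtraction of multiplicities away from the
basepoint). -/
noncomputable def mdiff (x0 : X) (S T : X → ℕ∞) : X → ℕ∞ := fun x => if x = x0 then ⊤ else S x - T x

/-- The intersection of a multiset with a subset `V ⊆ X`. -/
noncomputable def minter (x0 : X) (S : X → ℕ∞) (V : Set X) : X → ℕ∞ :=
  fun x => if x = x0 then ⊤ else if x ∈ V then S x else 0

/-- The multiset `S` has rank `n`: its total multiplicity away from the basepoint
is `n`, i.e. its non-basepoint part can be listed by a tuple of length `n`. -/
def HasRank (x0 : X) (S : X → ℕ∞) (n : ℕ) : Prop :=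
  ∃ f : Fin n → X, (∀ i, f i ≠ x0) ∧ ∀ x, x ≠ x0 → S x = {i : Fin n | f i = x}.encard
open Filter
open scoped Classical

section helpers
variable (Φ : SymmetricNorm)

lemma truncF_apply (ξ : ℕ → ℝ) (n i : ℕ) : truncF ξ n i = if i < n then ξ i else 0 := by
  classical
  rw [truncF]
  rw [Finset.sum_apply']
  simp only [Finsupp.single_apply]
  rw [Finset.sum_ite_eq' (Finset.range n) i ξ]
  simp [Finset.mem_range]

lemma SymmetricNorm.update_le (η : ℕ →₀ ℝ) (i : ℕ) (c : ℝ) (h : |c| ≤ |η i|) :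
    Φ.toFun (η.update i c) ≤ Φ.toFun η := by
  by_cases ha : η i = 0
  · have hc : c = 0 := by
      have := h; rw [ha, abs_zero] at this
      exact abs_nonpos_iff.mp this
    have : η.update i c = η := by
      ext j
      rw [Finsupp.coe_update, Function.update_apply]
      split <;> simp_all
    rw [this]
  · set a := η i with haa
    set σ : ℕ →₀ ℝ := η.update i (-a) with hσdef
    have hσ : Φ.toFun σ = Φ.toFun η := by
      rw [← Φ.abs_invariant σ, ← Φ.abs_invariant η]
      congr 1
      ext j
      simp only [Finsupp.mapRange_apply, hσdef, Finsupp.coe_update, Function.update_apply]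
      split <;> simp_all
    set l1 : ℝ := (a + c) / (2 * a) with hl1
    set l2 : ℝ := (a - c) / (2 * a) with hl2
    have key : η.update i c = l1 • η + l2 • σ := by
      ext j
      rw [Finsupp.coe_update, Function.update_apply]
      simp only [Finsupp.add_apply, Finsupp.smul_apply, smul_eq_mul, hσdef,
        Finsupp.coe_update, Function.update_apply]
      split
      · rename_i hj
        subst hj
        rw [hl1, hl2, ← haa]
        field_simp
        ring
      · rw [hl1, hl2]
        field_simp
        ring
    have habs : |l1| + |l2| ≤ 1 := by
      rw [hl1, hl2, abs_div, abs_div, abs_mul]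
      rw [← add_div, div_le_one (by positivity : (0:ℝ) < |2| * |a|)]
      have h2 : |(2:ℝ)| = 2 := by norm_num
      rw [h2]
      cases abs_cases (a + c) <;> cases abs_cases (a - c) <;> cases abs_cases a <;>
        cases abs_cases c <;> linarith [h]
    calc Φ.toFun (η.update i c) = Φ.toFun (l1 • η + l2 • σ) := by rw [key]
      _ ≤ Φ.toFun (l1 • η) + Φ.toFun (l2 • σ) := Φ.add_le _ _
      _ = |l1| * Φ.toFun η + |l2| * Φ.toFun η := by rw [Φ.smul_eq, Φ.smul_eq, hσ]
      _ = (|l1| + |l2|) * Φ.toFun η := by ring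
      _ ≤ 1 * Φ.toFun η := by
          apply mul_le_mul_of_nonneg_right habs (Φ.nonneg η)
      _ = Φ.toFun η := one_mul _

lemma SymmetricNorm.mono_aux (F : Finset ℕ) :
    ∀ (ξ η : ℕ →₀ ℝ), (∀ i, |ξ i| ≤ |η i|) → (∀ i ∉ F, ξ i = η i) →
      Φ.toFun ξ ≤ Φ.toFun η := by
  classical
  induction F using Finset.induction with
  | empty =>
    intro ξ η _ h
    have : ξ = η := Finsupp.ext fun i => h i (by simp)
    rw [this]
  | insert a F ha ih =>
    intro ξ η hle hout
    calc Φ.toFun ξ ≤ Φ.toFun (η.update a (ξ a)) := by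
          apply ih
          · intro i
            rw [Finsupp.coe_update, Function.update_apply]
            split
            · rename_i hi; rw [hi]
            · exact hle i
          · intro i hi
            rw [Finsupp.coe_update, Function.update_apply]
            split
            · rename_i h'; rw [h']
            · rename_i h'
              exact hout i (by simp [hi, h'])
      _ ≤ Φ.toFun η := Φ.update_le η a (ξ a) (hle a)

lemma SymmetricNorm.mono (ξ η : ℕ →₀ ℝ) (h : ∀ i, |ξ i| ≤ |η i|) :
    Φ.toFun ξ ≤ Φ.toFun η := by
  apply Φ.mono_aux (ξ.support ∪ η.support) ξ η h
  intro i hi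
  simp only [Finset.mem_union, Finsupp.mem_support_iff, not_or, not_not] at hi
  rw [hi.1, hi.2]

lemma truncF_abs_mono (ξ : ℕ → ℝ) {n m : ℕ} (h : n ≤ m) (i : ℕ) :
    |truncF ξ n i| ≤ |truncF ξ m i| := by
  rw [truncF_apply, truncF_apply]
  split
  · rename_i h'
    rw [if_pos (lt_of_lt_of_le h' h)]
  · simp [abs_nonneg]

lemma phi_trunc_mono (ξ : ℕ → ℝ) : Monotone fun n => Φ.toFun (truncF ξ n) :=
  fun n m h => Φ.mono _ _ (truncF_abs_mono ξ h)

end helpers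
section helpers2
variable (Φ : SymmetricNorm)

lemma ext_eq_of_tendsto {ξ : ℕ → ℝ} {L : ℝ}
    (h : Tendsto (fun n => Φ.toFun (truncF ξ n)) atTop (nhds L)) : Φ.ext ξ = L :=
  h.limUnder_eq

lemma trunc_le_ext {ξ : ℕ → ℝ} (hξ : MemLPhi Φ ξ) (n : ℕ) :
    Φ.toFun (truncF ξ n) ≤ Φ.ext ξ := by
  obtain ⟨L, hL⟩ := hξ.2
  rw [ext_eq_of_tendsto Φ hL]
  exact (phi_trunc_mono Φ ξ).ge_of_tendsto hL n

lemma memLPhi_of_dominated {ξ η : ℕ → ℝ} (hd : ∀ i, |ξ i| ≤ |η i|) (hη : MemLPhi Φ η) :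
    MemLPhi Φ ξ ∧ Φ.ext ξ ≤ Φ.ext η := by
  obtain ⟨h0, L, hL⟩ := hη
  have hz : Tendsto ξ atTop (nhds 0) := by
    rw [tendsto_zero_iff_abs_tendsto_zero]
    exact squeeze_zero (fun n => abs_nonneg _) hd (by simpa using h0.abs)
  have htr : ∀ n i, |truncF ξ n i| ≤ |truncF η n i| := by
    intro n i
    rw [truncF_apply, truncF_apply]
    split
    · exact hd i
    · simp
  have hb : ∀ n, Φ.toFun (truncF ξ n) ≤ L := fun n =>
    le_trans (Φ.mono _ _ (htr n)) ((phi_trunc_mono Φ η).ge_of_tendsto hL n)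
  have hbdd : BddAbove (Set.range fun n => Φ.toFun (truncF ξ n)) := by
    refine ⟨L, ?_⟩
    rintro x ⟨n, rfl⟩
    exact hb n
  have ht := tendsto_atTop_ciSup (phi_trunc_mono Φ ξ) hbdd
  refine ⟨⟨hz, _, ht⟩, ?_⟩
  rw [ext_eq_of_tendsto Φ ht, ext_eq_of_tendsto Φ hL]
  exact ciSup_le hb

lemma single_norm (i : ℕ) (c : ℝ) : Φ.toFun (Finsupp.single i c) = |c| := by
  have h1 : Φ.toFun (Finsupp.single i 1) = 1 := by
    have : Finsupp.single i (1:ℝ) =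
        Finsupp.equivMapDomain (Equiv.swap 0 i) (Finsupp.single 0 1) := by
      rw [Finsupp.equivMapDomain_single, Equiv.swap_apply_left]
    rw [this, Φ.perm_invariant, Φ.norm_single]
  calc Φ.toFun (Finsupp.single i c) = Φ.toFun (c • Finsupp.single i (1:ℝ)) := by
        rw [Finsupp.smul_single, smul_eq_mul, mul_one]
    _ = |c| * 1 := by rw [Φ.smul_eq, h1]
    _ = |c| := mul_one _

lemma entry_le_ext {ξ : ℕ → ℝ} (hξ : MemLPhi Φ ξ) (i : ℕ) : |ξ i| ≤ Φ.ext ξ := by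
  have h1 : Φ.toFun (Finsupp.single i (ξ i)) ≤ Φ.toFun (truncF ξ (i + 1)) := by
    apply Φ.mono
    intro j
    rw [truncF_apply, Finsupp.single_apply]
    rcases eq_or_ne i j with rfl | hij
    · rw [if_pos rfl, if_pos (Nat.lt_succ_self i)]
    · rw [if_neg hij]
      simp
  rw [single_norm] at h1
  exact h1.trans (trunc_le_ext Φ hξ _)

lemma ext_nonneg {ξ : ℕ → ℝ} (hξ : MemLPhi Φ ξ) : 0 ≤ Φ.ext ξ :=
  (abs_nonneg _).trans (entry_le_ext Φ hξ 0)

lemma truncF_add (α β : ℕ → ℝ) (n : ℕ) :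
    truncF (fun i => α i + β i) n = truncF α n + truncF β n := by
  ext j
  rw [Finsupp.add_apply, truncF_apply, truncF_apply, truncF_apply]
  split <;> simp

lemma memLPhi_add {α β : ℕ → ℝ} (hα : MemLPhi Φ α) (hβ : MemLPhi Φ β) :
    MemLPhi Φ (fun i => α i + β i) := by
  obtain ⟨ha0, La, hLa⟩ := hα
  obtain ⟨hb0, Lb, hLb⟩ := hβ
  refine ⟨by simpa using ha0.add hb0, ?_⟩
  have hb : ∀ n, Φ.toFun (truncF (fun i => α i + β i) n) ≤ La + Lb := by
    intro n
    rw [truncF_add]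
    exact le_trans (Φ.add_le _ _)
      (add_le_add ((phi_trunc_mono Φ α).ge_of_tendsto hLa n)
        ((phi_trunc_mono Φ β).ge_of_tendsto hLb n))
  have hbdd : BddAbove (Set.range fun n => Φ.toFun (truncF (fun i => α i + β i) n)) := by
    refine ⟨La + Lb, ?_⟩
    rintro x ⟨n, rfl⟩
    exact hb n
  exact ⟨_, tendsto_atTop_ciSup (phi_trunc_mono Φ _) hbdd⟩

end helpers2
section helpers3
variable {X : Type*} [MetricSpace X]

lemma equiv_of_encard_eq {α β : Type*} {s : Set α} {t : Set β} (hs : s.Finite)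
    (h : s.encard = t.encard) : Nonempty (s ≃ t) := by
  have ht : t.Finite := by
    rw [← Set.encard_ne_top_iff] at hs ⊢
    rwa [← h]
  have := hs.fintype
  have := ht.fintype
  refine ⟨Fintype.equivOfCardEq ?_⟩
  rw [Set.encard_eq_coe_toFinset_card, Set.encard_eq_coe_toFinset_card,
    Set.toFinset_card, Set.toFinset_card] at h
  exact_mod_cast h

lemma hasRank_iff_encard (x0 : X) (M : X → ℕ∞) (V : Set X) (u : ℕ → X)
    (hx0 : x0 ∉ V) (h1 : ∀ x ∈ V, M x = {j : ℕ | u j = x}.encard)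
    (h2 : ∀ x, x ≠ x0 → x ∉ V → M x = 0) (h3 : ∀ x ∈ V, M x ≠ ⊤) (n : ℕ) :
    HasRank x0 M n ↔ {j : ℕ | u j ∈ V}.encard = n := by
  constructor
  · rintro ⟨f, hf0, hfc⟩
    have hfV : ∀ a, f a ∈ V := by
      intro a
      by_contra hv
      have h' := hfc (f a) (hf0 a)
      rw [h2 (f a) (hf0 a) hv] at h'
      have h'' : ({a' : Fin n | f a' = f a} : Set (Fin n)).encard = 0 := h'.symm
      rw [Set.encard_eq_zero] at h''
      exact absurd h'' (Set.nonempty_iff_ne_empty.mp ⟨a, rfl⟩)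
    set A := {j : ℕ | u j ∈ V} with hA
    let gA : A → V := fun j => ⟨u j, j.2⟩
    let gF : Fin n → V := fun a => ⟨f a, hfV a⟩
    have key : ∀ v : V, Nonempty ({j : A // gA j = v} ≃ {a : Fin n // gF a = v}) := by
      intro v
      have hvne : (v : X) ≠ x0 := fun h => hx0 (h ▸ v.2)
      let e1 : {j : A // gA j = v} ≃ {j : ℕ | u j = (v : X)} :=
        { toFun := fun j => ⟨(j : A), by
            have := j.2
            rw [Subtype.ext_iff] at this
            exact this⟩
          invFun := fun j => ⟨⟨(j : ℕ), by
              have := j.2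
              show u (j : ℕ) ∈ V
              rw [this]; exact v.2⟩, Subtype.ext j.2⟩
          left_inv := fun j => by ext; rfl
          right_inv := fun j => by ext; rfl }
      let e2 : {a : Fin n // gF a = v} ≃ {a : Fin n | f a = (v : X)} :=
        { toFun := fun a => ⟨(a : Fin n), by
            have := a.2
            rw [Subtype.ext_iff] at this
            exact this⟩
          invFun := fun a => ⟨(a : Fin n), Subtype.ext a.2⟩
          left_inv := fun a => by ext; rfl
          right_inv := fun a => by ext; rfl }
      have hcard : ({j : ℕ | u j = (v : X)} : Set ℕ).encard
          = ({a : Fin n | f a = (v : X)} : Set (Fin n)).encard := by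
        rw [← h1 v v.2, ← hfc v hvne]
      have hfin : ({j : ℕ | u j = (v : X)} : Set ℕ).Finite := by
        rw [← Set.encard_ne_top_iff, ← h1 v v.2]
        exact h3 v v.2
      obtain ⟨em⟩ := equiv_of_encard_eq hfin hcard
      exact ⟨(e1.trans em).trans e2.symm⟩
    let eT : A ≃ Fin n :=
      ((Equiv.sigmaFiberEquiv gA).symm.trans
        (Equiv.sigmaCongrRight fun v => Classical.choice (key v))).trans
        (Equiv.sigmaFiberEquiv gF)
    have : A.encard = (Set.univ : Set (Fin n)).encard :=
      Set.encard_congr (eT.trans (Equiv.Set.univ (Fin n)).symm)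
    rw [this, Set.encard_univ]
    simp
  · intro h
    have hAfin : {j : ℕ | u j ∈ V}.Finite := Set.finite_of_encard_eq_coe h
    haveI := hAfin.fintype
    have hcard : Fintype.card {j : ℕ | u j ∈ V} = n := by
      rw [Set.encard_eq_coe_toFinset_card, Set.toFinset_card] at h
      exact_mod_cast h
    let e : Fin n ≃ {j : ℕ | u j ∈ V} := (Fintype.equivFinOfCardEq hcard).symm
    refine ⟨fun a => u (e a), fun a h' => hx0 (h' ▸ (e a).2), ?_⟩
    intro x hx
    by_cases hxV : x ∈ V
    · rw [h1 x hxV]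
      have himg : {j : ℕ | u j = x} =
          (fun a : Fin n => ((e a : ℕ))) '' {a : Fin n | u (e a) = x} := by
        ext j
        constructor
        · intro hj
          have hjA : j ∈ {j : ℕ | u j ∈ V} := by
            show u j ∈ V
            rw [hj]; exact hxV
          refine ⟨e.symm ⟨j, hjA⟩, ?_, by simp only [Equiv.apply_symm_apply]⟩
          show u (e (e.symm ⟨j, hjA⟩)) = x
          rw [Equiv.apply_symm_apply]
          exact hj
        · rintro ⟨a, ha, rfl⟩
          exact ha
      have hinj : Set.InjOn (fun a : Fin n => ((e a : ℕ))) {a : Fin n | u (e a) = x} :=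
        fun a _ b _ hab => e.injective (Subtype.val_injective hab)
      rw [himg, hinj.encard_image]
    · rw [h2 x hx hxV]
      have : {a : Fin n | u (e a) = x} = ∅ := by
        ext a
        simp only [Set.mem_setOf_eq, Set.mem_empty_iff_false, iff_false]
        intro ha
        exact hxV (ha ▸ (e a).2)
      rw [this, Set.encard_empty]

end helpers3

/-- Let `(U_0, …, U_k)` be a positively separated tuple of subsets of `X` with
`x₀ ∈ U_0` and `δ > 0` a lower bound on the pairwise distances. If `S, T ∈
S_Φ(X, x₀)` have supports contained in `U_0 ∪ ⋯ ∪ U_k` and `d_Φ(S, T) < δ`, then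
`d_Φ(S ∩ U_i, T ∩ U_i) ≤ d_Φ(S, T)` for every `i`, and `rank (S ∩ U_i) =
rank (T ∩ U_i)` for every `i ≠ 0`. -/
theorem dPhi_minter (x0 : X) (Φ : SymmetricNorm) (k : ℕ) (U : Fin (k + 1) → Set X)
    (hx0 : x0 ∈ U 0) (δ : ℝ) (hδ : 0 < δ)
    (hsep : ∀ i j, i ≠ j → ∀ x ∈ U i, ∀ y ∈ U j, δ ≤ dist x y)
    (S T : X → ℕ∞) (hS : MemSPhi Φ x0 S) (hT : MemSPhi Φ x0 T)
    (hSsupp : {x | S x ≠ 0} ⊆ ⋃ i, U i) (hTsupp : {x | T x ≠ 0} ⊆ ⋃ i, U i)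
    (hd : dPhi Φ x0 S T < δ) :
    (∀ i, dPhi Φ x0 (minter x0 S (U i)) (minter x0 T (U i)) ≤ dPhi Φ x0 S T) ∧
      (∀ i, i ≠ 0 → ∀ n : ℕ,
        HasRank x0 (minter x0 S (U i)) n ↔ HasRank x0 (minter x0 T (U i)) n) := by
  classical
  obtain ⟨hSc, s₀, hs₀, hs₀l⟩ := hS
  obtain ⟨hTc, t₀, ht₀, ht₀l⟩ := hT
  set D : Set ℝ := {r | ∃ s t : ℕ → X, IsEnum x0 S s ∧ IsEnum x0 T t ∧
    MemLPhi Φ (fun i => dist (s i) (t i)) ∧ r = Φ.ext fun i => dist (s i) (t i)} with hDdef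
  have hdPhiD : dPhi Φ x0 S T = sInf D := rfl
  -- D is nonempty
  have hdom : ∀ i, |dist (s₀ i) (t₀ i)| ≤ |dist x0 (s₀ i) + dist x0 (t₀ i)| := by
    intro i
    rw [abs_of_nonneg dist_nonneg, abs_of_nonneg (by positivity)]
    calc dist (s₀ i) (t₀ i) ≤ dist (s₀ i) x0 + dist x0 (t₀ i) := dist_triangle _ _ _
      _ = dist x0 (s₀ i) + dist x0 (t₀ i) := by rw [dist_comm]
  have hmem₀ := (memLPhi_of_dominated Φ hdom (memLPhi_add Φ hs₀l ht₀l)).1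
  have hD : (Φ.ext fun i => dist (s₀ i) (t₀ i)) ∈ D := ⟨s₀, t₀, hs₀, ht₀, hmem₀, rfl⟩
  have hDbdd : BddBelow D := by
    refine ⟨0, ?_⟩
    rintro r ⟨s, t, _, _, hm', rfl⟩
    exact ext_nonneg Φ hm'
  -- pairwise disjointness
  have hdisj : ∀ i j, i ≠ j → ∀ x, x ∈ U i → x ∉ U j := by
    intro i j hij x hxi hxj
    have := hsep i j hij x hxi x hxj
    rw [dist_self] at this
    linarith
  have hx0notin : ∀ i, i ≠ 0 → x0 ∉ U i := fun i hi => hdisj 0 i (Ne.symm hi) x0 hx0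
  -- the key construction
  have key : ∀ s t : ℕ → X, IsEnum x0 S s → IsEnum x0 T t →
      MemLPhi Φ (fun j => dist (s j) (t j)) →
      (Φ.ext fun j => dist (s j) (t j)) < δ →
      (∀ i, dPhi Φ x0 (minter x0 S (U i)) (minter x0 T (U i)) ≤
          Φ.ext fun j => dist (s j) (t j)) ∧
        (∀ i, i ≠ 0 → ∀ n : ℕ,
          HasRank x0 (minter x0 S (U i)) n ↔ HasRank x0 (minter x0 T (U i)) n) := by
    intro s t hs ht hm hrδ
    have hent : ∀ j, dist (s j) (t j) < δ := fun j =>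
      lt_of_le_of_lt ((le_abs_self _).trans (entry_le_ext Φ hm j)) hrδ
    have hsU : ∀ j, ∃ i, s j ∈ U i := by
      intro j
      by_cases h : s j = x0
      · exact ⟨0, h ▸ hx0⟩
      · have hne : S (s j) ≠ 0 := by
          rw [hs (s j) h]
          exact Set.encard_ne_zero.mpr ⟨j, rfl⟩
        exact Set.mem_iUnion.mp (hSsupp hne)
    have htU : ∀ j, ∃ i, t j ∈ U i := by
      intro j
      by_cases h : t j = x0
      · exact ⟨0, h ▸ hx0⟩
      · have hne : T (t j) ≠ 0 := by
          rw [ht (t j) h]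
          exact Set.encard_ne_zero.mpr ⟨j, rfl⟩
        exact Set.mem_iUnion.mp (hTsupp hne)
    have hmatch : ∀ j i, s j ∈ U i ↔ t j ∈ U i := by
      intro j i
      have hab : ∀ a b : Fin (k + 1), s j ∈ U a → t j ∈ U b → a = b := by
        intro a b hsa htb
        by_contra hne
        exact absurd (hsep a b hne _ hsa _ htb) (not_le.mpr (hent j))
      constructor
      · intro hsj
        obtain ⟨b, hb⟩ := htU j
        rw [hab i b hsj hb]
        exact hb
      · intro htj
        obtain ⟨a, ha⟩ := hsU j
        rw [← hab a i ha htj]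
        exact ha
    -- per-part construction
    have main : ∀ i, dPhi Φ x0 (minter x0 S (U i)) (minter x0 T (U i)) ≤
        Φ.ext fun j => dist (s j) (t j) := by
      intro i
      set s' : ℕ → X := fun j => if s j ∈ U i then s j else x0 with hs'def
      set t' : ℕ → X := fun j => if t j ∈ U i then t j else x0 with ht'def
      have henum : ∀ (M : X → ℕ∞) (u u' : ℕ → X), IsEnum x0 M u →
          (∀ j, u' j = if u j ∈ U i then u j else x0) →
          IsEnum x0 (minter x0 M (U i)) u' := by
        intro M u u' hu hu'
        intro x hx
        show (if x = x0 then ⊤ else if x ∈ U i then M x else 0) = _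
        rw [if_neg hx]
        by_cases hxU : x ∈ U i
        · rw [if_pos hxU, hu x hx]
          congr 1
          ext j
          simp only [Set.mem_setOf_eq, hu']
          constructor
          · intro hj
            rw [if_pos (by rw [hj]; exact hxU)]
            exact hj
          · intro hj
            by_cases hc : u j ∈ U i
            · rwa [if_pos hc] at hj
            · rw [if_neg hc] at hj
              exact absurd hj.symm hx
        · rw [if_neg hxU]
          have : {j : ℕ | u' j = x} = ∅ := by
            ext j
            simp only [Set.mem_setOf_eq, Set.mem_empty_iff_false, iff_false, hu']
            intro hj
            by_cases hc : u j ∈ U i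
            · rw [if_pos hc] at hj
              exact hxU (hj ▸ hc)
            · rw [if_neg hc] at hj
              exact hx hj.symm
          rw [this, Set.encard_empty]
      have hs' : IsEnum x0 (minter x0 S (U i)) s' := henum S s s' hs fun j => rfl
      have ht' : IsEnum x0 (minter x0 T (U i)) t' := henum T t t' ht fun j => rfl
      have hdist : ∀ j, |dist (s' j) (t' j)| ≤ |dist (s j) (t j)| := by
        intro j
        rw [hs'def, ht'def]
        simp only
        by_cases hc : s j ∈ U i
        · rw [if_pos hc, if_pos ((hmatch j i).mp hc)]
        · rw [if_neg hc, if_neg (fun h => hc ((hmatch j i).mpr h)), dist_self, abs_zero]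
          exact abs_nonneg _
      obtain ⟨hm', hle'⟩ := memLPhi_of_dominated Φ hdist hm
      refine le_trans (csInf_le ?_ ⟨s', t', hs', ht', hm', rfl⟩) hle'
      refine ⟨0, ?_⟩
      rintro r ⟨u, v, _, _, hmu, rfl⟩
      exact ext_nonneg Φ hmu
    refine ⟨main, ?_⟩
    intro i hi n
    have hx0i : x0 ∉ U i := hx0notin i hi
    have hiffS : HasRank x0 (minter x0 S (U i)) n ↔ {j : ℕ | s j ∈ U i}.encard = n := by
      apply hasRank_iff_encard x0 _ (U i) s hx0i
      · intro x hxU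
        have hx : x ≠ x0 := fun h => hx0i (h ▸ hxU)
        show (if x = x0 then ⊤ else if x ∈ U i then S x else 0) = _
        rw [if_neg hx, if_pos hxU]
        exact hs x hx
      · intro x hx hxU
        show (if x = x0 then ⊤ else if x ∈ U i then S x else 0) = 0
        rw [if_neg hx, if_neg hxU]
      · intro x hxU
        have hx : x ≠ x0 := fun h => hx0i (h ▸ hxU)
        show (if x = x0 then ⊤ else if x ∈ U i then S x else 0) ≠ ⊤
        rw [if_neg hx, if_pos hxU]
        exact hSc.2.1 x hx
    have hiffT : HasRank x0 (minter x0 T (U i)) n ↔ {j : ℕ | t j ∈ U i}.encard = n := by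
      apply hasRank_iff_encard x0 _ (U i) t hx0i
      · intro x hxU
        have hx : x ≠ x0 := fun h => hx0i (h ▸ hxU)
        show (if x = x0 then ⊤ else if x ∈ U i then T x else 0) = _
        rw [if_neg hx, if_pos hxU]
        exact ht x hx
      · intro x hx hxU
        show (if x = x0 then ⊤ else if x ∈ U i then T x else 0) = 0
        rw [if_neg hx, if_neg hxU]
      · intro x hxU
        have hx : x ≠ x0 := fun h => hx0i (h ▸ hxU)
        show (if x = x0 then ⊤ else if x ∈ U i then T x else 0) ≠ ⊤
        rw [if_neg hx, if_pos hxU]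
        exact hTc.2.1 x hx
    have hsets : {j : ℕ | s j ∈ U i} = {j : ℕ | t j ∈ U i} := by
      ext j
      exact hmatch j i
    rw [hiffS, hiffT, hsets]
  constructor
  · intro i
    apply le_of_forall_pos_le_add
    intro ε hε
    have hlt : sInf D < min (dPhi Φ x0 S T + ε) δ := by
      rw [← hdPhiD] at *
      exact lt_min (by linarith) hd
    obtain ⟨r, hrD, hrlt⟩ := exists_lt_of_csInf_lt ⟨_, hD⟩ hlt
    obtain ⟨s, t, hs, ht, hm, rfl⟩ := hrD
    have h1 := (key s t hs ht hm (hrlt.trans_le (min_le_right _ _))).1 i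
    exact le_trans h1 (le_of_lt (hrlt.trans_le (min_le_left _ _)))
  · intro i hi n
    rw [hdPhiD] at hd
    obtain ⟨r, hrD, hrlt⟩ := exists_lt_of_csInf_lt ⟨_, hD⟩ hd
    obtain ⟨s, t, hs, ht, hm, rfl⟩ := hrD
    exact (key s t hs ht hm hrlt).2 i hi n
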